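/- Let E : H¹₀ → ℝ and Ψ : H¹₀ → [0,∞) with Ψ(w) ≥ c‖w‖²₁ (Korn) and E(w) ≤ C Ψ(w) for all w. For s > 0 define α(s) := sup{E(w) - sΨ(w) : w ∈ 𝒜}, where 𝒜 = {w ∈ H¹₀ : ‖√ρ̄ w‖₀ = 1}. Then: (i) α is strictly decreasing on (0,∞); (ii) α is locally Lipschitz continuous on (0,∞); (iii) if α(s₀) > 0 for some s₀ and α(s₁) < 0 for some s₁ > s₀, then there exists a unique Λ > 0 with Λ² = α(Λ) = sup_{w∈𝒜}(E(w) - ΛΨ(w)). -/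
import Mathlib


open Set

/-- Properties of the modified variational functional
`α(s) = sup{E(w) - sΨ(w) : w ∈ 𝒜}` where `𝒜 = {w : ‖√ρ̄ w‖₀ = 1}`:
(i) `α` is strictly decreasing on `(0,∞)`;
(ii) `α` is locally Lipschitz on `(0,∞)`;
(iii) if `α(s₀) > 0` and `α(s₁) < 0` for some `0 < s₀ < s₁`, there is a unique
`Λ > 0` with `Λ² = α(Λ)`. -/
theorem modified_variational_principle
    (V : Type*) [NormedAddCommGroup V] [NormedSpace ℝ V]
    (E Ψ N : V → ℝ) (c C : ℝ) (hc : 0 < c)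
    (hKorn : ∀ w, c * ‖w‖ ^ 2 ≤ Ψ w) (hΨ0 : ∀ w, 0 ≤ Ψ w)
    (hEC : ∀ w, E w ≤ C * Ψ w)
    (hN0 : N 0 = 0)
    (hne : {w : V | N w = 1}.Nonempty)
    (α : ℝ → ℝ)
    (hα : ∀ s, α s = sSup ((fun w => E w - s * Ψ w) '' {w | N w = 1}))
    (hatt : ∀ s > (0 : ℝ), ∃ v, N v = 1 ∧
      IsGreatest ((fun w => E w - s * Ψ w) '' {w | N w = 1}) (E v - s * Ψ v)) :
    StrictAntiOn α (Ioi 0) ∧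
    (∀ b₁ b₂ : ℝ, 0 < b₁ → b₁ < b₂ → ∃ q : ℝ, ∀ s₁ ∈ Icc b₁ b₂, ∀ s₂ ∈ Icc b₁ b₂,
      |α s₁ - α s₂| ≤ q * |s₁ - s₂|) ∧
    (∀ s₀ s₁ : ℝ, 0 < s₀ → s₀ < s₁ → 0 < α s₀ → α s₁ < 0 →
      ∃! Λ : ℝ, 0 < Λ ∧ Λ ^ 2 = α Λ) := by
  -- Key fact: for each s > 0 the sup is attained at a point with positive Ψ,
  -- and α s is an upper bound of the values.
  have key : ∀ s > (0 : ℝ), ∃ v, N v = 1 ∧ 0 < Ψ v ∧ α s = E v - s * Ψ v ∧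
      ∀ w, N w = 1 → E w - s * Ψ w ≤ α s := by
    intro s hs
    obtain ⟨v, hv, hg⟩ := hatt s hs
    have hv0 : v ≠ 0 := by
      intro h; rw [h, hN0] at hv; norm_num at hv
    have hn : 0 < ‖v‖ := norm_pos_iff.2 hv0
    have hΨv : 0 < Ψ v := lt_of_lt_of_le (by positivity) (hKorn v)
    have hαs : α s = E v - s * Ψ v := by
      rw [hα]; exact hg.csSup_eq
    refine ⟨v, hv, hΨv, hαs, fun w hw => ?_⟩
    rw [hαs]; exact hg.2 ⟨w, hw, rfl⟩
  -- (i) strict antitonicity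
  have anti : StrictAntiOn α (Ioi 0) := by
    intro s hs t ht hst
    obtain ⟨v, hv, hΨv, hαt, _⟩ := key t ht
    obtain ⟨_, _, _, _, hub⟩ := key s hs
    have h1 : E v - s * Ψ v ≤ α s := hub v hv
    have h2 : α t < E v - s * Ψ v := by rw [hαt]; nlinarith
    linarith
  have antiton : ∀ s ∈ Ioi (0:ℝ), ∀ t ∈ Ioi (0:ℝ), s ≤ t → α t ≤ α s := by
    intro s hs t ht hst
    rcases eq_or_lt_of_le hst with h | h
    · rw [h]
    · exact (anti hs ht h).le
  -- (ii) local Lipschitz with explicit constant, stated with a nonnegative q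
  have lip : ∀ b₁ b₂ : ℝ, 0 < b₁ → b₁ < b₂ → ∃ q : ℝ, 0 ≤ q ∧
      ∀ s₁ ∈ Icc b₁ b₂, ∀ s₂ ∈ Icc b₁ b₂, |α s₁ - α s₂| ≤ q * |s₁ - s₂| := by
    intro b₁ b₂ hb₁ hb
    obtain ⟨w₀, hw₀⟩ := hne
    set m : ℝ := E w₀ - b₂ * Ψ w₀ with hm
    have hhalf : (0:ℝ) < b₁ / 2 := by linarith
    set β : ℝ := α (b₁ / 2) with hβ
    set q : ℝ := (β - m) / (b₁ / 2) with hq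
    -- bound Ψ at maximizers for s ∈ [b₁, b₂]
    have hbound : ∀ s ∈ Icc b₁ b₂, ∃ v, N v = 1 ∧ 0 ≤ Ψ v ∧ Ψ v ≤ q ∧
        α s = E v - s * Ψ v := by
      intro s hsI
      have hs : 0 < s := lt_of_lt_of_le hb₁ hsI.1
      obtain ⟨v, hv, hΨv, hαs, hub⟩ := key s hs
      obtain ⟨_, _, _, _, hubh⟩ := key (b₁/2) hhalf
      -- m ≤ α s
      have hmle : m ≤ α s := by
        have := hub w₀ hw₀
        have : E w₀ - s * Ψ w₀ ≤ α s := this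
        have h2 : m ≤ E w₀ - s * Ψ w₀ := by
          have := hΨ0 w₀; have := hsI.2; nlinarith
        linarith
      -- β ≥ E v - (b₁/2) Ψ v = α s + (s - b₁/2) Ψ v
      have hβge : E v - (b₁/2) * Ψ v ≤ β := hubh v hv
      have hΨq : Ψ v ≤ q := by
        rw [hq]
        rw [le_div_iff₀ hhalf]
        have hs1 : b₁ ≤ s := hsI.1
        nlinarith
      exact ⟨v, hv, hΨv.le, hΨq, hαs⟩
    have hq0 : 0 ≤ q := by
      obtain ⟨v, _, h0, hle, _⟩ := hbound b₁ ⟨le_refl _, hb.le⟩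
      linarith
    refine ⟨q, hq0, ?_⟩
    have main : ∀ s₁ ∈ Icc b₁ b₂, ∀ s₂ ∈ Icc b₁ b₂, α s₁ - α s₂ ≤ q * |s₁ - s₂| := by
      intro s₁ h₁ s₂ h₂
      obtain ⟨v, hv, h0, hle, hαs⟩ := hbound s₁ h₁
      have hs₂ : 0 < s₂ := lt_of_lt_of_le hb₁ h₂.1
      obtain ⟨_, _, _, _, hub₂⟩ := key s₂ hs₂
      have := hub₂ v hv
      have habs : s₂ - s₁ ≤ |s₁ - s₂| := by
        rw [abs_sub_comm]; exact le_abs_self _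
      have h1 : α s₁ - α s₂ ≤ (s₂ - s₁) * Ψ v := by rw [hαs] at *; linarith
      have h2 : (s₂ - s₁) * Ψ v ≤ |s₁ - s₂| * Ψ v := by nlinarith
      have h3 : |s₁ - s₂| * Ψ v ≤ |s₁ - s₂| * q := by
        have := abs_nonneg (s₁ - s₂); nlinarith
      linarith [h1, h2, h3, mul_comm |s₁ - s₂| q]
    intro s₁ h₁ s₂ h₂
    rw [abs_sub_le_iff]
    constructor
    · exact main s₁ h₁ s₂ h₂
    · rw [abs_sub_comm]; exact main s₂ h₂ s₁ h₁
  refine ⟨anti, fun b₁ b₂ h₁ h₂ => (lip b₁ b₂ h₁ h₂).imp (fun q h => h.2), ?_⟩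
  -- (iii)
  intro s₀ s₁ hs₀ hss hα₀ hα₁
  set a : ℝ := min s₀ (Real.sqrt (α s₀) / 2) with ha
  have hsqrt : 0 < Real.sqrt (α s₀) := Real.sqrt_pos.2 hα₀
  have ha0 : 0 < a := lt_min hs₀ (by linarith)
  have has₀ : a ≤ s₀ := min_le_left _ _
  have has₁ : a < s₁ := lt_of_le_of_lt has₀ hss
  have hαa : α s₀ ≤ α a := antiton a ha0 s₀ hs₀ has₀
  have hasq : a ^ 2 ≤ α s₀ / 4 := by
    have h1 : a ≤ Real.sqrt (α s₀) / 2 := min_le_right _ _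
    have h2 : (Real.sqrt (α s₀) / 2) ^ 2 = α s₀ / 4 := by
      rw [div_pow, Real.sq_sqrt hα₀.le]; ring
    nlinarith
  set g : ℝ → ℝ := fun s => s ^ 2 - α s with hg
  have hga : g a < 0 := by
    simp only [hg]; nlinarith
  have hgs₁ : 0 < g s₁ := by
    simp only [hg]; nlinarith
  -- continuity of α on [a, s₁]
  obtain ⟨q, hq0, hqlip⟩ := lip a s₁ ha0 has₁
  have hαcont : ContinuousOn α (Icc a s₁) := by
    have : LipschitzOnWith (Real.toNNReal q) α (Icc a s₁) := by
      rw [lipschitzOnWith_iff_dist_le_mul]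
      intro x hx y hy
      rw [Real.dist_eq, Real.dist_eq, Real.coe_toNNReal q hq0]
      exact hqlip x hx y hy
    exact this.continuousOn
  have hgcont : ContinuousOn g (Icc a s₁) :=
    ((continuous_pow 2).continuousOn).sub hαcont
  have hIVT := intermediate_value_Icc has₁.le hgcont
  have h0mem : (0:ℝ) ∈ Icc (g a) (g s₁) := ⟨hga.le, hgs₁.le⟩
  obtain ⟨Λ, hΛmem, hΛ0⟩ := hIVT h0mem
  have hΛpos : 0 < Λ := lt_of_lt_of_le ha0 hΛmem.1
  have hΛsq : Λ ^ 2 = α Λ := by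
    have : Λ ^ 2 - α Λ = 0 := hΛ0
    linarith
  refine ⟨Λ, ⟨hΛpos, hΛsq⟩, ?_⟩
  rintro y ⟨hy, hy2⟩
  rcases lt_trichotomy y Λ with h | h | h
  · exfalso
    have := anti (mem_Ioi.2 hy) (mem_Ioi.2 hΛpos) h
    nlinarith
  · exact h
  · exfalso
    have := anti (mem_Ioi.2 hΛpos) (mem_Ioi.2 hy) h
    nlinarith
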